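/- Let f : X → ℝ be Hölder continuous admitting a unique maximizing measure μ_∞, and let V be a Hölder continuous calibrated subaction for f. Then for every nonempty open set A ⊆ X and every y_0 ∈ X: sup_{z∈A} R_−^∞(z) ≤ limsup_{k→∞} sup{ R_−^k(z) : z ∈ A, σ^k(z) = y_0 }. -/

import Mathlib

open MeasureTheory Filter Topology Set ENNReal

noncomputable section

namespace GXY

variable {M : Type*}

/-- The shift map on the sequence space `ℕ → M`. -/
def shift (x : ℕ → M) : ℕ → M := fun n => x (n + 1)

/-- Prepending a symbol `a` to a sequence `x`. -/
def cons (a : M) (x : ℕ → M) : ℕ → M := fun n => Nat.casesOn n a x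

/-- The metric `d(x,y) = ∑ θ^n d_M(x_n, y_n)` on `ℕ → M`. -/
def D [MetricSpace M] (θ : ℝ) (x y : ℕ → M) : ℝ := ∑' n, θ ^ n * dist (x n) (y n)

/-- Hölder continuity with respect to the metric `D θ`. -/
def IsHolder [MetricSpace M] (θ : ℝ) (f : (ℕ → M) → ℝ) : Prop :=
  ∃ C > (0 : ℝ), ∃ α ∈ Set.Ioc (0 : ℝ) 1, ∀ x y, |f x - f y| ≤ C * (D θ x y) ^ α

/-- Shift-invariant Borel probability measures on `ℕ → M`. -/
def IsInvProb [MetricSpace M] [MeasurableSpace M] (μ : Measure (ℕ → M)) : Prop :=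
  IsProbabilityMeasure μ ∧ μ.map shift = μ

/-- The maximal ergodic average `β(f)`. -/
def betaF [MetricSpace M] [MeasurableSpace M] (f : (ℕ → M) → ℝ) : ℝ :=
  sSup { r | ∃ μ : Measure (ℕ → M), IsInvProb μ ∧ r = ∫ x, f x ∂μ }

/-- A maximizing measure for `f`. -/
def IsMaximizing [MetricSpace M] [MeasurableSpace M] (f : (ℕ → M) → ℝ)
    (μ : Measure (ℕ → M)) : Prop :=
  IsInvProb μ ∧ ∫ x, f x ∂μ = betaF f

/-- A calibrated subaction `V` for `f`:
`V y = max_{σ x = y} (f x + V x - β f)` for every `y`. -/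
def IsCalibrated [MetricSpace M] [MeasurableSpace M] (f V : (ℕ → M) → ℝ) : Prop :=
  Continuous V ∧
    ∀ y, IsGreatest { t | ∃ x, shift x = y ∧ t = f x + V x - betaF f } (V y)

/-- The Ruelle transfer operator `(L_g w)(x) = ∫_M e^{g(ax)} w(ax) dm(a)`. -/
def Ruelle [MetricSpace M] [MeasurableSpace M] (m : Measure M) (g w : (ℕ → M) → ℝ) :
    (ℕ → M) → ℝ :=
  fun x => ∫ a, Real.exp (g (cons a x)) * w (cons a x) ∂m

/-- `R₊ = β(f) + V ∘ σ - V - f ≥ 0`. -/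
def Rplus [MetricSpace M] [MeasurableSpace M] (f V : (ℕ → M) → ℝ) (x : ℕ → M) : ℝ :=
  betaF f + V (shift x) - V x - f x

/-- `R₊^∞(z) = ∑_{j≥0} R₊(σ^j z) ∈ [0,∞]`. -/
def RplusInf [MetricSpace M] [MeasurableSpace M] (f V : (ℕ → M) → ℝ) (z : ℕ → M) : ℝ≥0∞ :=
  ∑' j : ℕ, ENNReal.ofReal (Rplus f V (shift^[j] z))

/-- `R₋ = f + V - V ∘ σ - β(f) ≤ 0`. -/
def Rminus [MetricSpace M] [MeasurableSpace M] (f V : (ℕ → M) → ℝ) (x : ℕ → M) : ℝ :=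
  f x + V x - V (shift x) - betaF f

/-- The Birkhoff sum `R₋^k = ∑_{j<k} R₋ ∘ σ^j`. -/
def RminusBirk [MetricSpace M] [MeasurableSpace M] (f V : (ℕ → M) → ℝ) (k : ℕ)
    (z : ℕ → M) : ℝ :=
  ∑ j ∈ Finset.range k, Rminus f V (shift^[j] z)

/-- Extended-real logarithm with the convention `log 0 = -∞`. -/
def elog (t : ℝ) : EReal := if t = 0 then ⊥ else ((Real.log t : ℝ) : EReal)

section Aux
set_option linter.unusedSectionVars false
open BoundedContinuousFunction

variable [MetricSpace M]

/-! ### Shift basics -/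

lemma shift_iter_apply (x : ℕ → M) (k i : ℕ) : shift^[k] x i = x (i + k) := by
  induction k generalizing x with
  | zero => rfl
  | succ k ih =>
    rw [Function.iterate_succ_apply, ih]
    rfl

lemma continuous_shift : Continuous (shift : (ℕ → M) → (ℕ → M)) :=
  continuous_pi fun n => continuous_apply (n + 1)

lemma shift_iter_add (x : ℕ → M) (m k : ℕ) :
    shift^[m + k] x = shift^[k] (shift^[m] x) := by
  rw [add_comm, Function.iterate_add_apply]

/-! ### The metric D -/

variable {θ : ℝ}

lemma summable_D (hθ : θ ∈ Set.Ioo (0:ℝ) 1) (hdiam : ∀ a b : M, dist a b ≤ 1) (x y : ℕ → M) :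
    Summable (fun n => θ ^ n * dist (x n) (y n)) := by
  have hθ0 : (0:ℝ) < θ := hθ.1
  refine Summable.of_nonneg_of_le (fun n => by positivity) (fun n => ?_)
    (summable_geometric_of_lt_one hθ.1.le hθ.2)
  calc θ ^ n * dist (x n) (y n) ≤ θ ^ n * 1 := by
        apply mul_le_mul_of_nonneg_left (hdiam _ _) (by positivity)
    _ = θ ^ n := mul_one _

lemma D_nonneg (hθ : θ ∈ Set.Ioo (0:ℝ) 1) (x y : ℕ → M) : 0 ≤ D θ x y := by
  have hθ0 : (0:ℝ) < θ := hθ.1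
  exact tsum_nonneg fun n => by positivity

lemma D_triangle (hθ : θ ∈ Set.Ioo (0:ℝ) 1) (hdiam : ∀ a b : M, dist a b ≤ 1) (x y w : ℕ → M) :
    D θ x w ≤ D θ x y + D θ y w := by
  have hθ0 : (0:ℝ) < θ := hθ.1
  simp only [D]
  rw [← Summable.tsum_add (summable_D hθ hdiam x y) (summable_D hθ hdiam y w)]
  refine Summable.tsum_le_tsum (fun n => ?_) (summable_D hθ hdiam x w)
    ((summable_D hθ hdiam x y).add (summable_D hθ hdiam y w))
  rw [← mul_add]
  exact mul_le_mul_of_nonneg_left (dist_triangle _ _ _) (by positivity)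

lemma D_shift (hθ : θ ∈ Set.Ioo (0:ℝ) 1) (hdiam : ∀ a b : M, dist a b ≤ 1) {x y : ℕ → M}
    {n : ℕ} (h : ∀ i < n, x i = y i) :
    D θ x y = θ ^ n * D θ (shift^[n] x) (shift^[n] y) := by
  rw [D, ← Summable.sum_add_tsum_nat_add n (summable_D hθ hdiam x y)]
  have h1 : ∑ i ∈ Finset.range n, θ ^ i * dist (x i) (y i) = 0 := by
    apply Finset.sum_eq_zero
    intro i hi
    rw [h i (Finset.mem_range.mp hi), dist_self, mul_zero]
  rw [h1, zero_add, D, ← tsum_mul_left]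
  congr 1
  funext i
  rw [shift_iter_apply, shift_iter_apply, pow_add]
  ring

lemma D_le (hθ : θ ∈ Set.Ioo (0:ℝ) 1) (hdiam : ∀ a b : M, dist a b ≤ 1) (x y : ℕ → M) :
    D θ x y ≤ (1 - θ)⁻¹ := by
  have hθ0 : (0:ℝ) < θ := hθ.1
  rw [D]
  calc ∑' n, θ ^ n * dist (x n) (y n) ≤ ∑' n : ℕ, θ ^ n := by
        refine Summable.tsum_le_tsum (fun n => ?_) (summable_D hθ hdiam x y)
          (summable_geometric_of_lt_one hθ.1.le hθ.2)
        calc θ ^ n * dist (x n) (y n) ≤ θ ^ n * 1 :=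
              mul_le_mul_of_nonneg_left (hdiam _ _) (by positivity)
          _ = θ ^ n := mul_one _
    _ = (1 - θ)⁻¹ := tsum_geometric_of_lt_one hθ.1.le hθ.2

lemma D_mem_nhds (hθ : θ ∈ Set.Ioo (0:ℝ) 1) (hdiam : ∀ a b : M, dist a b ≤ 1) (q : ℕ → M)
    {ε : ℝ} (hε : 0 < ε) : {x : ℕ → M | D θ x q < ε} ∈ 𝓝 q := by
  have hθ0 : (0:ℝ) < θ := hθ.1
  obtain ⟨n, hn⟩ : ∃ n : ℕ, θ ^ n * (1 - θ)⁻¹ < ε / 2 := by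
    have h0 : Filter.Tendsto (fun n : ℕ => θ ^ n * (1 - θ)⁻¹) atTop (𝓝 (0 * (1 - θ)⁻¹)) :=
      (tendsto_pow_atTop_nhds_zero_of_lt_one hθ.1.le hθ.2).mul_const _
    rw [zero_mul] at h0
    exact (h0.eventually (eventually_lt_nhds (by positivity : (0:ℝ) < ε / 2))).exists
  set δ := ε / (2 * (n + 1)) with hδdef
  have hδ : 0 < δ := by positivity
  have hU : {x : ℕ → M | ∀ i < n, dist (x i) (q i) < δ} ∈ 𝓝 q := by
    have hmem : ∀ i, {x : ℕ → M | dist (x i) (q i) < δ} ∈ 𝓝 q := by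
      intro i
      have hc : Continuous fun x : ℕ → M => dist (x i) (q i) :=
        (continuous_apply i).dist continuous_const
      have : IsOpen {x : ℕ → M | dist (x i) (q i) < δ} := isOpen_lt hc continuous_const
      exact this.mem_nhds (by simp [hδ])
    refine Filter.mem_of_superset
      ((Filter.biInter_mem (Set.finite_Iio n)).mpr fun i _ => hmem i) ?_
    intro x hx
    simp only [Set.mem_iInter, Set.mem_setOf_eq] at hx ⊢
    exact fun i hi => hx i hi
  filter_upwards [hU] with x hx
  show D θ x q < ε
  have hsum := summable_D hθ hdiam x q
  rw [D, ← Summable.sum_add_tsum_nat_add n hsum]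
  have h1 : ∑ i ∈ Finset.range n, θ ^ i * dist (x i) (q i) ≤ n * δ := by
    calc ∑ i ∈ Finset.range n, θ ^ i * dist (x i) (q i)
        ≤ ∑ _i ∈ Finset.range n, δ := by
          refine Finset.sum_le_sum fun i hi => ?_
          have hxi := hx i (Finset.mem_range.mp hi)
          calc θ ^ i * dist (x i) (q i) ≤ 1 * dist (x i) (q i) := by
                apply mul_le_mul_of_nonneg_right _ dist_nonneg
                exact pow_le_one₀ hθ.1.le hθ.2.le
            _ = dist (x i) (q i) := one_mul _
            _ ≤ δ := hxi.le
      _ = n * δ := by rw [Finset.sum_const, Finset.card_range, nsmul_eq_mul]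
  have h2 : ∑' i : ℕ, θ ^ (i + n) * dist (x (i + n)) (q (i + n)) ≤ θ ^ n * (1 - θ)⁻¹ := by
    have hb : ∀ i : ℕ, θ ^ (i + n) * dist (x (i + n)) (q (i + n)) ≤ θ ^ n * θ ^ i := by
      intro i
      rw [pow_add]
      calc θ ^ i * θ ^ n * dist (x (i + n)) (q (i + n)) ≤ θ ^ i * θ ^ n * 1 :=
            mul_le_mul_of_nonneg_left (hdiam _ _) (by positivity)
        _ = θ ^ n * θ ^ i := by ring
    calc ∑' i : ℕ, θ ^ (i + n) * dist (x (i + n)) (q (i + n))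
        ≤ ∑' i : ℕ, θ ^ n * θ ^ i := by
          refine Summable.tsum_le_tsum hb ((summable_D hθ hdiam x q).comp_injective
            (add_left_injective n)) ?_
          exact (summable_geometric_of_lt_one hθ.1.le hθ.2).mul_left _
      _ = θ ^ n * (1 - θ)⁻¹ := by
          rw [tsum_mul_left, tsum_geometric_of_lt_one hθ.1.le hθ.2]
  have hnδ : (n : ℝ) * δ ≤ ε / 2 := by
    have : (n : ℝ) * δ ≤ ((n : ℝ) + 1) * δ := by nlinarith
    refine this.trans (le_of_eq ?_)
    rw [hδdef]
    field_simp
  linarith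


/-! ### eta helper -/

lemma exists_eta (Kc a ε : ℝ) (ha : 0 < a) (hε : 0 < ε) (hKc : 0 ≤ Kc) :
    ∃ η : ℝ, 0 < η ∧ η ≤ 1 ∧ Kc * η ^ a < ε := by
  set b := (ε / 2) / (Kc + 1) with hb
  have hb0 : 0 < b := by positivity
  refine ⟨min 1 (b ^ (1 / a)), lt_min one_pos (Real.rpow_pos_of_pos hb0 _), min_le_left _ _, ?_⟩
  have h1 : (min 1 (b ^ (1 / a))) ^ a ≤ (b ^ (1 / a)) ^ a := by
    apply Real.rpow_le_rpow (le_min zero_le_one (Real.rpow_pos_of_pos hb0 _).le)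
      (min_le_right _ _) ha.le
  have h2 : (b ^ (1 / a)) ^ a = b := by
    rw [← Real.rpow_mul hb0.le, one_div, inv_mul_cancel₀ ha.ne', Real.rpow_one]
  calc Kc * (min 1 (b ^ (1 / a))) ^ a ≤ Kc * b := by
        apply mul_le_mul_of_nonneg_left (h1.trans h2.le) hKc
    _ ≤ (Kc + 1) * b := by nlinarith
    _ = ε / 2 := by rw [hb]; field_simp
    _ < ε := by linarith

lemma rpow_le_rpow_exp {t a b : ℝ} (ht0 : 0 ≤ t) (ht1 : t ≤ 1) (ha : 0 < a) (hab : a ≤ b) :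
    t ^ b ≤ t ^ a := by
  rcases eq_or_lt_of_le ht0 with h | h
  · rw [← h, Real.zero_rpow (by linarith : b ≠ 0), Real.zero_rpow ha.ne']
  · exact Real.rpow_le_rpow_of_exponent_ge h ht1 hab

/-! ### Hölder implies continuous -/

lemma IsHolder.continuous {θ : ℝ} (hθ : θ ∈ Set.Ioo (0:ℝ) 1)
    (hdiam : ∀ a b : M, dist a b ≤ 1) {g : (ℕ → M) → ℝ} (hg : IsHolder θ g) :
    Continuous g := by
  obtain ⟨C, hC, a, ha, hHol⟩ := hg
  rw [continuous_iff_continuousAt]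
  intro x₀
  rw [ContinuousAt, Metric.tendsto_nhds]
  intro ε hε
  obtain ⟨η, hη0, hη1, hηε⟩ := exists_eta C a ε ha.1 hε hC.le
  filter_upwards [D_mem_nhds hθ hdiam x₀ hη0] with x hx
  have hD := D_nonneg hθ x x₀
  rw [Real.dist_eq]
  calc |g x - g x₀| ≤ C * D θ x x₀ ^ a := hHol x x₀
    _ ≤ C * η ^ a := by
        apply mul_le_mul_of_nonneg_left (Real.rpow_le_rpow hD hx.le ha.1.le) hC.le
    _ < ε := hηε

/-! ### Cylinders inside open sets -/

lemma exists_cylinder_subset {A : Set (ℕ → M)} (hA : IsOpen A) {z : ℕ → M} (hz : z ∈ A) :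
    ∃ N : ℕ, ∀ w : ℕ → M, (∀ i < N, w i = z i) → w ∈ A := by
  obtain ⟨I, u, hIu, hsub⟩ := isOpen_pi_iff.mp hA z hz
  refine ⟨(I.sup id) + 1, fun w hw => hsub ?_⟩
  intro i hi
  rw [hw i (Nat.lt_succ_of_le (Finset.le_sup (f := id) hi))]
  exact (hIu i hi).2

/-! ### Calibration consequences -/

section Cal
variable [MeasurableSpace M] {f V : (ℕ → M) → ℝ}

lemma Rminus_nonpos (hV : IsCalibrated f V) (x : ℕ → M) : Rminus f V x ≤ 0 := by
  have h := (hV.2 (shift x)).2 ⟨x, rfl, rfl⟩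
  rw [Rminus]
  linarith

lemma Rplus_nonneg (hV : IsCalibrated f V) (x : ℕ → M) : 0 ≤ Rplus f V x := by
  have := Rminus_nonpos hV x
  rw [Rminus] at this
  rw [Rplus]
  linarith

lemma Rplus_eq_neg_Rminus (x : ℕ → M) : Rplus f V x = - Rminus f V x := by
  rw [Rplus, Rminus]; ring

lemma exists_calibrated_chain (hV : IsCalibrated f V) (y : ℕ → M) (m : ℕ) :
    ∃ p : ℕ → M, shift^[m] p = y ∧ ∀ j < m, Rminus f V (shift^[j] p) = 0 := by
  induction m with
  | zero => exact ⟨y, rfl, fun j hj => absurd hj (Nat.not_lt_zero j)⟩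
  | succ m ih =>
    obtain ⟨p, hp, hcal⟩ := ih
    obtain ⟨x, hx, hVx⟩ := (hV.2 p).1
    refine ⟨x, ?_, ?_⟩
    · rw [Function.iterate_succ_apply, hx, hp]
    · intro j hj
      cases j with
      | zero =>
        simp only [Function.iterate_zero, id_eq]
        rw [Rminus, hx, hVx]
        ring
      | succ j =>
        rw [Function.iterate_succ_apply, hx]
        exact hcal j (Nat.succ_lt_succ_iff.mp hj)

lemma RminusBirk_eq (k : ℕ) (x : ℕ → M) :
    RminusBirk f V k x =
      (∑ j ∈ Finset.range k, f (shift^[j] x)) + V x - V (shift^[k] x) - k * betaF f := by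
  have : ∀ j, Rminus f V (shift^[j] x)
      = f (shift^[j] x) + (V (shift^[j] x) - V (shift^[j+1] x)) - betaF f := by
    intro j
    rw [Rminus, Function.iterate_succ_apply']
    ring
  rw [RminusBirk]
  simp only [this]
  rw [Finset.sum_sub_distrib, Finset.sum_add_distrib, Finset.sum_range_sub' (fun j => V (shift^[j] x)) k]
  simp only [Function.iterate_zero, id_eq, Finset.sum_const, Finset.card_range, nsmul_eq_mul]
  ring

end Cal


/-! ### Construction of an invariant measure on a compact invariant set -/

section KB
open NNReal
variable [CompactSpace M] [MeasurableSpace M] [BorelSpace M]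

lemma nnreal_dist_le {a c b : ℝ≥0} (ha : a ≤ b) (hc : c ≤ b) : dist a c ≤ (b : ℝ) := by
  rw [NNReal.dist_eq, abs_le]
  have h1 := NNReal.coe_le_coe.2 ha
  have h2 := NNReal.coe_le_coe.2 hc
  have h3 := a.coe_nonneg
  have h4 := c.coe_nonneg
  constructor <;> linarith

/-- A bounded continuous `ℝ≥0`-valued "Urysohn" function. -/
lemma exists_bcf_indicator {s t : Set (ℕ → M)} (hs : IsClosed s) (ht : IsClosed t)
    (hd : Disjoint s t) :
    ∃ u : (ℕ → M) →ᵇ ℝ≥0, (∀ x, u x ≤ 1) ∧ (∀ x ∈ s, u x = 1) ∧ ∀ x ∈ t, u x = 0 := by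
  obtain ⟨g, hg0, hg1, hg01⟩ := exists_continuous_zero_one_of_isClosed ht hs hd.symm
  have hle1 : ∀ x, Real.toNNReal (g x) ≤ 1 :=
    fun x => Real.toNNReal_le_iff_le_coe.2 (by simpa using (hg01 x).2)
  refine ⟨BoundedContinuousFunction.mkOfBound
    ⟨fun x => Real.toNNReal (g x), continuous_real_toNNReal.comp g.continuous⟩ 1
    (fun x y => by simpa using nnreal_dist_le (hle1 x) (hle1 y)),
    fun x => hle1 x, fun x hx => ?_, fun x hx => ?_⟩
  · show Real.toNNReal (g x) = 1
    have : g x = 1 := hg1 hx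
    rw [this, Real.toNNReal_one]
  · show Real.toNNReal (g x) = 0
    have : g x = 0 := hg0 hx
    rw [this, Real.toNNReal_zero]

section BcfRiesz
variable {X : Type*} [TopologicalSpace X]
variable (Λ : (X →ᵇ ℝ≥0) →ₗ[ℝ≥0] ℝ≥0)

def bcfRieszContentAux : TopologicalSpace.Compacts X → ℝ≥0 := fun K =>
  sInf (Λ '' { f : X →ᵇ ℝ≥0 | ∀ x ∈ K, (1 : ℝ≥0) ≤ f x })

theorem bcfRieszContentAux_image_nonempty (K : TopologicalSpace.Compacts X) :
    (Λ '' { f : X →ᵇ ℝ≥0 | ∀ x ∈ K, (1 : ℝ≥0) ≤ f x }).Nonempty := by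
  rw [Set.image_nonempty]
  use (1 : X →ᵇ ℝ≥0)
  intro x _
  simp only [BoundedContinuousFunction.coe_one, Pi.one_apply]; rfl

theorem bcfRieszContentAux_mono {K₁ K₂ : TopologicalSpace.Compacts X} (h : K₁ ≤ K₂) :
    bcfRieszContentAux Λ K₁ ≤ bcfRieszContentAux Λ K₂ :=
  csInf_le_csInf (OrderBot.bddBelow _) (bcfRieszContentAux_image_nonempty Λ K₂)
    (Set.image_mono (Set.setOf_subset_setOf.mpr fun _ f_hyp x x_in_K₁ => f_hyp x (h x_in_K₁)))

theorem bcfRieszContentAux_le {K : TopologicalSpace.Compacts X} {f : X →ᵇ ℝ≥0}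
    (h : ∀ x ∈ K, (1 : ℝ≥0) ≤ f x) :
    bcfRieszContentAux Λ K ≤ Λ f :=
  csInf_le (OrderBot.bddBelow _) ⟨f, ⟨h, rfl⟩⟩

theorem bcf_exists_lt_rieszContentAux_add_pos (K : TopologicalSpace.Compacts X) {ε : ℝ≥0}
    (εpos : 0 < ε) :
    ∃ f : X →ᵇ ℝ≥0, (∀ x ∈ K, (1 : ℝ≥0) ≤ f x) ∧ Λ f < bcfRieszContentAux Λ K + ε := by
  obtain ⟨α, ⟨α_in_image, α_lt⟩⟩ := exists_lt_of_csInf_lt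
    (bcfRieszContentAux_image_nonempty Λ K) (lt_add_of_pos_right (bcfRieszContentAux Λ K) εpos)
  rw [Set.mem_image] at α_in_image
  obtain ⟨f, f_hyp⟩ := α_in_image
  use f
  rw [f_hyp.right]
  exact ⟨f_hyp.left, α_lt⟩

theorem bcfRieszContentAux_sup_le (K1 K2 : TopologicalSpace.Compacts X) :
    bcfRieszContentAux Λ (K1 ⊔ K2) ≤ bcfRieszContentAux Λ K1 + bcfRieszContentAux Λ K2 := by
  apply _root_.le_of_forall_pos_le_add
  intro ε εpos
  obtain ⟨f1, f_test_function_K1⟩ := bcf_exists_lt_rieszContentAux_add_pos Λ K1 (half_pos εpos)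
  obtain ⟨f2, f_test_function_K2⟩ := bcf_exists_lt_rieszContentAux_add_pos Λ K2 (half_pos εpos)
  have f_test_function_union : ∀ x ∈ K1 ⊔ K2, (1 : ℝ≥0) ≤ (f1 + f2) x := by
    rintro x (x_in_K1 | x_in_K2)
    · exact le_add_right (f_test_function_K1.left x x_in_K1)
    · exact le_add_left (f_test_function_K2.left x x_in_K2)
  apply (bcfRieszContentAux_le Λ f_test_function_union).trans (le_of_lt _)
  rw [map_add]
  apply lt_of_lt_of_le (_root_.add_lt_add f_test_function_K1.right f_test_function_K2.right)
    (le_of_eq _)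
  rw [add_assoc, add_comm (ε / 2), add_assoc, add_halves ε, add_assoc]

end BcfRiesz

/-- Krylov–Bogolyubov: a closed nonempty forward-invariant set carries an invariant
probability measure. -/
lemma exists_invariant_prob {K : Set (ℕ → M)} (hne : K.Nonempty)
    (hcl : IsClosed K) (hinv : ∀ x ∈ K, shift x ∈ K) :
    ∃ μ : Measure (ℕ → M), IsProbabilityMeasure μ ∧ μ.map shift = μ ∧ μ Kᶜ = 0 := by
  classical
  obtain ⟨x₀, hx₀⟩ := hne
  have horb : ∀ j, shift^[j] x₀ ∈ K := by
    intro j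
    induction j with
    | zero => exact hx₀
    | succ j ih => rw [Function.iterate_succ_apply']; exact hinv _ ih
  set σc : C(ℕ → M, ℕ → M) := ⟨shift, continuous_shift⟩ with hσc
  -- the averaging functionals
  set Ln : ℕ → ((ℕ → M) →ᵇ ℝ≥0) → ℝ≥0 :=
    fun n g => (∑ j ∈ Finset.range n, g (shift^[j] x₀)) / n with hLn
  have hbound : ∀ g : (ℕ → M) →ᵇ ℝ≥0, ∃ b : ℝ≥0, ∀ x, g x ≤ b := by
    intro g
    obtain ⟨xm, -, hxm⟩ := isCompact_univ.exists_isMaxOn ⟨x₀, trivial⟩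
      g.continuous.continuousOn
    exact ⟨g xm, fun x => hxm (trivial : x ∈ Set.univ)⟩
  have hLn_le : ∀ (g : (ℕ → M) →ᵇ ℝ≥0) (b : ℝ≥0), (∀ x, g x ≤ b) → ∀ n, Ln n g ≤ b := by
    intro g b hb n
    rcases Nat.eq_zero_or_pos n with h | h
    · subst h; simp [hLn]
    · rw [hLn]
      simp only
      rw [div_le_iff₀ (by exact_mod_cast h : (0:ℝ≥0) < n)]
      calc ∑ j ∈ Finset.range n, g (shift^[j] x₀) ≤ ∑ _j ∈ Finset.range n, b :=
            Finset.sum_le_sum fun j _ => hb _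
        _ = n • b := by rw [Finset.sum_const, Finset.card_range]
        _ = b * n := by rw [nsmul_eq_mul, mul_comm]
  set 𝒰 : Ultrafilter ℕ := Ultrafilter.of atTop with h𝒰
  have hU_le : (𝒰 : Filter ℕ) ≤ atTop := Ultrafilter.of_le _
  have hlim : ∀ g : (ℕ → M) →ᵇ ℝ≥0, ∃ ℓ : ℝ≥0,
      Filter.Tendsto (fun n => Ln n g) 𝒰 (𝓝 ℓ) := by
    intro g
    obtain ⟨b, hb⟩ := hbound g
    obtain ⟨ℓ, -, hℓ⟩ := (isCompact_Icc (a := (0:ℝ≥0)) (b := b)).ultrafilter_le_nhds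
      (𝒰.map (fun n => Ln n g)) (by
        rw [Ultrafilter.coe_map, Filter.le_principal_iff, Filter.mem_map]
        exact Filter.Eventually.of_forall fun n => ⟨zero_le, hLn_le g b hb n⟩)
    exact ⟨ℓ, hℓ⟩
  choose Lim hLim using hlim
  have hL_mono : ∀ g h : (ℕ → M) →ᵇ ℝ≥0, (∀ x, g x ≤ h x) → Lim g ≤ Lim h := by
    intro g h hgh
    refine le_of_tendsto_of_tendsto (hLim g) (hLim h) (Filter.Eventually.of_forall fun n => ?_)
    rw [hLn]
    simp only
    rw [div_eq_mul_inv, div_eq_mul_inv]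
    exact mul_le_mul_left (Finset.sum_le_sum fun j _ => hgh _) _
  have hL_shift : ∀ g : (ℕ → M) →ᵇ ℝ≥0, Lim (g.compContinuous σc) = Lim g := by
    intro g
    obtain ⟨b, hb⟩ := hbound g
    refine tendsto_nhds_unique (hLim _) (Filter.Tendsto.congr_dist (hLim g) ?_)
    have hdist : ∀ n : ℕ, dist (Ln n g) (Ln n (g.compContinuous σc)) ≤ (b : ℝ) / n := by
      intro n
      rcases Nat.eq_zero_or_pos n with h | h
      · subst h; simp [hLn]
      have hid : (∑ j ∈ Finset.range n, g (shift^[j+1] x₀)) + g x₀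
          = (∑ j ∈ Finset.range n, g (shift^[j] x₀)) + g (shift^[n] x₀) := by
        have h1 := Finset.sum_range_succ' (fun j => g (shift^[j] x₀)) n
        have h2 := Finset.sum_range_succ (fun j => g (shift^[j] x₀)) n
        simp only [Function.iterate_zero, id_eq] at h1
        rw [← h1, h2]
      have hcomp : ∀ j, (g.compContinuous σc) (shift^[j] x₀) = g (shift^[j+1] x₀) := by
        intro j
        rw [BoundedContinuousFunction.coe_compContinuous]
        simp only [Function.comp_apply, hσc, ContinuousMap.coe_mk]
        rw [← Function.iterate_succ_apply' shift j x₀]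
      have hcast : ((Ln n (g.compContinuous σc) : ℝ≥0) : ℝ)
          = (∑ j ∈ Finset.range n, (g (shift^[j+1] x₀) : ℝ)) / n := by
        rw [hLn]
        simp only
        rw [NNReal.coe_div]
        push_cast
        congr 1
        exact Finset.sum_congr rfl fun j _ => by rw [hcomp j]
      have hcastg : ((Ln n g : ℝ≥0) : ℝ) = (∑ j ∈ Finset.range n, (g (shift^[j] x₀) : ℝ)) / n := by
        rw [hLn]; simp only; rw [NNReal.coe_div]; push_cast; ring
      have hidR : (∑ j ∈ Finset.range n, (g (shift^[j+1] x₀) : ℝ)) + (g x₀ : ℝ)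
          = (∑ j ∈ Finset.range n, (g (shift^[j] x₀) : ℝ)) + (g (shift^[n] x₀) : ℝ) := by
        exact_mod_cast congrArg (fun t : ℝ≥0 => (t : ℝ)) hid
      rw [NNReal.dist_eq, hcast, hcastg]
      rw [div_sub_div_same, abs_div]
      have hn0 : (0:ℝ) < n := by exact_mod_cast h
      rw [abs_of_nonneg hn0.le]
      apply div_le_div_of_nonneg_right _ hn0.le
      have h1 : (g x₀ : ℝ) ≤ b := by exact_mod_cast hb x₀
      have h2 : (g (shift^[n] x₀) : ℝ) ≤ b := by exact_mod_cast hb _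
      have h3 : (0:ℝ) ≤ g x₀ := (g x₀).coe_nonneg
      have h4 : (0:ℝ) ≤ g (shift^[n] x₀) := (g (shift^[n] x₀)).coe_nonneg
      rw [abs_le]
      constructor <;> nlinarith [hidR]
    refine squeeze_zero (fun n => dist_nonneg) hdist ?_ |>.mono_left hU_le
    exact tendsto_const_div_atTop_nhds_zero_nat (b : ℝ)
  -- the positive linear functional
  set Λ : ((ℕ → M) →ᵇ ℝ≥0) →ₗ[ℝ≥0] ℝ≥0 :=
    { toFun := Lim
      map_add' := by
        intro g h
        refine tendsto_nhds_unique (hLim (g + h)) ?_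
        have : (fun n => Ln n (g + h)) = fun n => Ln n g + Ln n h := by
          funext n
          rw [hLn]
          simp only [BoundedContinuousFunction.coe_add, Pi.add_apply]
          rw [Finset.sum_add_distrib, add_div]
        rw [this]
        exact (hLim g).add (hLim h)
      map_smul' := by
        intro c g
        refine tendsto_nhds_unique (hLim (c • g)) ?_
        have : (fun n => Ln n (c • g)) = fun n => c * Ln n g := by
          funext n
          rw [hLn]
          simp only [BoundedContinuousFunction.coe_smul, smul_eq_mul]
          rw [← Finset.mul_sum, mul_div_assoc]
        rw [this]
        simpa using (hLim g).const_mul c } with hΛ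
  have hΛapp : ∀ g, Λ g = Lim g := fun g => rfl
  have hΛ1 : Λ (1 : (ℕ → M) →ᵇ ℝ≥0) = 1 := by
    rw [hΛapp]
    refine tendsto_nhds_unique (hLim 1) ?_
    have hev : ∀ᶠ n in atTop, Ln n (1 : (ℕ → M) →ᵇ ℝ≥0) = 1 := by
      filter_upwards [Filter.eventually_ge_atTop 1] with n hn
      rw [hLn]
      simp only [BoundedContinuousFunction.coe_one, Pi.one_apply, Finset.sum_const,
        Finset.card_range, nsmul_eq_mul, mul_one]
      rw [div_self (by exact_mod_cast Nat.one_le_iff_ne_zero.mp hn : (n:ℝ≥0) ≠ 0)]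
    refine Filter.Tendsto.congr' ?_ tendsto_const_nhds
    exact (hev.filter_mono hU_le).mono fun n h => h.symm
  have hΛK0 : ∀ g : (ℕ → M) →ᵇ ℝ≥0, (∀ x ∈ K, g x = 0) → Λ g = 0 := by
    intro g hg
    rw [hΛapp]
    refine tendsto_nhds_unique (hLim g) ?_
    have : (fun n => Ln n g) = fun _ => 0 := by
      funext n
      rw [hLn]
      simp only
      rw [Finset.sum_eq_zero fun j _ => hg _ (horb j), zero_div]
    rw [this]
    exact tendsto_const_nhds
  -- the content
  have hsup_disjoint : ∀ K₁ K₂ : TopologicalSpace.Compacts (ℕ → M),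
      Disjoint (K₁ : Set (ℕ → M)) K₂ →
      bcfRieszContentAux Λ (K₁ ⊔ K₂) = bcfRieszContentAux Λ K₁ + bcfRieszContentAux Λ K₂ := by
    intro K₁ K₂ hd
    refine le_antisymm (bcfRieszContentAux_sup_le Λ K₁ K₂) ?_
    apply le_csInf (bcfRieszContentAux_image_nonempty Λ _)
    rintro r ⟨F, hF, rfl⟩
    obtain ⟨u, hu1, huK₁, huK₂⟩ := exists_bcf_indicator K₁.isCompact.isClosed
      K₂.isCompact.isClosed hd
    obtain ⟨bF, hbF⟩ := hbound F
    set P₁ : (ℕ → M) →ᵇ ℝ≥0 := BoundedContinuousFunction.mkOfBound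
      ⟨fun x => F x * u x, F.continuous.mul u.continuous⟩ bF
      (fun x y => nnreal_dist_le (le_trans (mul_le_mul' (hbF x) (hu1 x)) (by simp))
        (le_trans (mul_le_mul' (hbF y) (hu1 y)) (by simp))) with hP₁
    set P₂ : (ℕ → M) →ᵇ ℝ≥0 := BoundedContinuousFunction.mkOfBound
      ⟨fun x => F x * (1 - u x), F.continuous.mul (continuous_const.sub u.continuous)⟩ bF
      (fun x y => nnreal_dist_le (le_trans (mul_le_mul' (hbF x) tsub_le_self) (by simp))
        (le_trans (mul_le_mul' (hbF y) tsub_le_self) (by simp))) with hP₂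
    have hsplit : F = P₁ + P₂ := by
      apply DFunLike.ext
      intro x
      show F x = P₁ x + P₂ x
      show F x = F x * u x + F x * (1 - u x)
      rw [← mul_add, add_tsub_cancel_of_le (hu1 x), mul_one]
    have h1 : bcfRieszContentAux Λ K₁ ≤ Λ P₁ := by
      apply bcfRieszContentAux_le
      intro x hx
      show (1:ℝ≥0) ≤ F x * u x
      rw [huK₁ x hx, mul_one]
      exact hF x (Or.inl hx)
    have h2 : bcfRieszContentAux Λ K₂ ≤ Λ P₂ := by
      apply bcfRieszContentAux_le
      intro x hx
      show (1:ℝ≥0) ≤ F x * (1 - u x)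
      rw [huK₂ x hx, tsub_zero, mul_one]
      exact hF x (Or.inr hx)
    calc bcfRieszContentAux Λ K₁ + bcfRieszContentAux Λ K₂ ≤ Λ P₁ + Λ P₂ := add_le_add h1 h2
      _ = Λ (P₁ + P₂) := (map_add Λ P₁ P₂).symm
      _ = Λ F := by rw [← hsplit]
  set 𝒞 : MeasureTheory.Content (ℕ → M) :=
    { toFun := bcfRieszContentAux Λ
      mono' := fun _ _ h => bcfRieszContentAux_mono Λ h
      sup_disjoint' := fun K₁ K₂ hd _ _ => hsup_disjoint K₁ K₂ hd
      sup_le' := bcfRieszContentAux_sup_le Λ } with h𝒞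
  set μ : Measure (ℕ → M) := 𝒞.measure with hμdef
  have h𝒞app : ∀ C : TopologicalSpace.Compacts (ℕ → M),
      (𝒞 C : ℝ≥0∞) = (bcfRieszContentAux Λ C : ℝ≥0∞) := fun _ => rfl
  have hopen : ∀ (U : Set (ℕ → M)) (hU : IsOpen U),
      μ U = ⨆ (C : TopologicalSpace.Compacts (ℕ → M)) (_ : (C : Set (ℕ → M)) ⊆ U),
        (bcfRieszContentAux Λ C : ℝ≥0∞) := by
    intro U hU
    rw [hμdef, MeasureTheory.Content.measure_apply _ hU.measurableSet,
      MeasureTheory.Content.outerMeasure_of_isOpen _ U hU]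
    rfl
  -- total mass one
  have huniv : μ Set.univ = 1 := by
    rw [hopen Set.univ isOpen_univ]
    apply le_antisymm
    · refine iSup₂_le fun C _ => ?_
      have h1 : bcfRieszContentAux Λ C ≤ Λ 1 :=
        bcfRieszContentAux_le Λ (fun x _ => by
          simp [BoundedContinuousFunction.coe_one])
      rw [hΛ1] at h1
      exact_mod_cast h1
    · refine le_trans ?_ (le_iSup₂ (⟨Set.univ, isCompact_univ⟩ :
        TopologicalSpace.Compacts (ℕ → M)) (Set.subset_univ _))
      have h1 : (1 : ℝ≥0) ≤ bcfRieszContentAux Λ ⟨Set.univ, isCompact_univ⟩ := by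
        apply le_csInf (bcfRieszContentAux_image_nonempty Λ _)
        rintro r ⟨F, hF, rfl⟩
        rw [← hΛ1]
        exact hL_mono 1 F fun x => by
          simpa [BoundedContinuousFunction.coe_one] using hF x trivial
      exact_mod_cast h1
  haveI hμprob : IsProbabilityMeasure μ := ⟨huniv⟩
  -- vanishing outside K
  have hKc : μ Kᶜ = 0 := by
    rw [hopen Kᶜ hcl.isOpen_compl]
    refine le_antisymm (iSup₂_le fun C hC => ?_) zero_le
    obtain ⟨u, hu1, huC, huK⟩ := exists_bcf_indicator C.isCompact.isClosed hcl
      (Set.disjoint_left.mpr fun x hx => hC hx)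
    have h1 : bcfRieszContentAux Λ C ≤ Λ u :=
      bcfRieszContentAux_le Λ (fun x hx => (huC x hx).ge)
    have h2 : Λ u = 0 := hΛK0 u huK
    rw [h2] at h1
    simpa using ENNReal.coe_le_coe.2 h1
  -- invariance
  have hmeas : Measurable (shift : (ℕ → M) → (ℕ → M)) := continuous_shift.measurable
  have hkey : ∀ (U : Set (ℕ → M)), IsOpen U → μ (shift ⁻¹' U) = μ U := by
    intro U hU
    have hU' : IsOpen (shift ⁻¹' U) := hU.preimage continuous_shift
    rw [hopen _ hU, hopen _ hU']
    apply le_antisymm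
    · refine iSup₂_le fun C hC => ?_
      have himg : (TopologicalSpace.Compacts.map shift continuous_shift C :
          Set (ℕ → M)) ⊆ U := by
        rintro y ⟨x, hx, rfl⟩
        exact hC hx
      refine le_trans ?_ (le_iSup₂ (TopologicalSpace.Compacts.map shift continuous_shift C) himg)
      apply ENNReal.coe_le_coe.2
      apply le_csInf (bcfRieszContentAux_image_nonempty Λ _)
      rintro r ⟨F, hF, rfl⟩
      have hF' : ∀ x ∈ C, (1:ℝ≥0) ≤ (F.compContinuous σc) x := by
        intro x hx
        rw [BoundedContinuousFunction.coe_compContinuous]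
        exact hF _ ⟨x, hx, rfl⟩
      calc bcfRieszContentAux Λ C ≤ Λ (F.compContinuous σc) := bcfRieszContentAux_le Λ hF'
        _ = Λ F := hL_shift F
    · refine iSup₂_le fun C hC => ?_
      obtain ⟨W, hWopen, hCW, hWU⟩ :=
        normal_exists_closure_subset C.isCompact.isClosed hU hC
      obtain ⟨u, hu1, huC, huW⟩ := exists_bcf_indicator C.isCompact.isClosed
        hWopen.isClosed_compl (Set.disjoint_left.mpr fun x hx hx' => hx' (hCW hx))
      set u' := u.compContinuous σc with hu'
      have hu'app : ∀ x, u' x = u (shift x) := fun x => by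
        rw [hu', BoundedContinuousFunction.coe_compContinuous]; rfl
      set C' : TopologicalSpace.Compacts (ℕ → M) :=
        ⟨closure {x | u' x ≠ 0}, isClosed_closure.isCompact⟩ with hC'
      have hC'sub : (C' : Set (ℕ → M)) ⊆ shift ⁻¹' U := by
        have h1 : {x | u' x ≠ 0} ⊆ shift ⁻¹' (closure W) := by
          intro x hx
          rw [Set.mem_setOf_eq, hu'app] at hx
          refine subset_closure ?_
          by_contra hW
          exact hx (huW _ hW)
        refine le_trans (closure_minimal h1 (isClosed_closure.preimage continuous_shift)) ?_
        exact Set.preimage_mono hWU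
      refine le_trans ?_ (le_iSup₂ C' hC'sub)
      apply ENNReal.coe_le_coe.2
      calc bcfRieszContentAux Λ C ≤ Λ u := bcfRieszContentAux_le Λ (fun x hx => (huC x hx).ge)
        _ = Λ u' := (hL_shift u).symm
        _ ≤ bcfRieszContentAux Λ C' := by
            apply le_csInf (bcfRieszContentAux_image_nonempty Λ _)
            rintro r ⟨F, hF, rfl⟩
            apply hL_mono
            intro x
            by_cases hx : u' x = 0
            · rw [hx]; exact zero_le
            · exact le_trans (hu1 _) (hF x (subset_closure hx))
  have hmap : μ.map shift = μ := by
    haveI : IsProbabilityMeasure (μ.map shift) :=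
      MeasureTheory.Measure.isProbabilityMeasure_map hmeas.aemeasurable
    refine MeasureTheory.ext_of_generate_finite {s : Set (ℕ → M) | IsOpen s} ?_ ?_ ?_ ?_
    · exact BorelSpace.measurable_eq
    · intro s hs t ht _
      rw [Set.mem_setOf_eq] at hs ht ⊢
      exact hs.inter ht
    · intro U hU
      rw [Set.mem_setOf_eq] at hU
      rw [Measure.map_apply hmeas hU.measurableSet]
      exact hkey U hU
    · rw [measure_univ, measure_univ]
  exact ⟨μ, hμprob, hmap, hKc⟩


/-! ### Invariant measures on the zero set of `Rplus` are maximizing -/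

lemma continuous_Rplus {θ : ℝ} (hθ : θ ∈ Set.Ioo (0:ℝ) 1) (hdiam : ∀ a b : M, dist a b ≤ 1)
    {f V : (ℕ → M) → ℝ} (hf : IsHolder θ f) (hVc : Continuous V) :
    Continuous (Rplus f V) := by
  have hfc : Continuous f := IsHolder.continuous hθ hdiam hf
  exact ((continuous_const.add (hVc.comp continuous_shift)).sub hVc).sub hfc

lemma integrable_of_continuous {g : (ℕ → M) → ℝ} (hg : Continuous g)
    (μ : Measure (ℕ → M)) [IsFiniteMeasure μ] : Integrable g μ := by
  have : HasCompactSupport g := HasCompactSupport.of_compactSpace g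
  exact hg.integrable_of_hasCompactSupport this

lemma integral_eq_betaF {θ : ℝ} (hθ : θ ∈ Set.Ioo (0:ℝ) 1)
    (hdiam : ∀ a b : M, dist a b ≤ 1) {f V : (ℕ → M) → ℝ}
    (hf : IsHolder θ f) (hV : IsCalibrated f V)
    {K : Set (ℕ → M)} (hK0 : ∀ x ∈ K, Rplus f V x = 0)
    {μ : Measure (ℕ → M)} (hprob : IsProbabilityMeasure μ)
    (hmap : μ.map shift = μ) (hKc : μ Kᶜ = 0) :
    ∫ x, f x ∂μ = betaF f := by
  have hfc : Continuous f := IsHolder.continuous hθ hdiam hf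
  have hVc : Continuous V := hV.1
  have hmeas : Measurable (shift : (ℕ → M) → (ℕ → M)) := continuous_shift.measurable
  have hint_f : Integrable f μ := integrable_of_continuous hfc μ
  have hint_V : Integrable V μ := integrable_of_continuous hVc μ
  have hint_Vσ : Integrable (fun x => V (shift x)) μ :=
    integrable_of_continuous (hVc.comp continuous_shift) μ
  have hVinv : ∫ x, V (shift x) ∂μ = ∫ x, V x ∂μ := by
    calc ∫ x, V (shift x) ∂μ = ∫ y, V y ∂(μ.map shift) :=
          (integral_map hmeas.aemeasurable hVc.aestronglyMeasurable).symm
      _ = ∫ x, V x ∂μ := by rw [hmap]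
  have hae : Rplus f V =ᵐ[μ] 0 := by
    refine measure_mono_null ?_ hKc
    intro x hx
    simp only [Set.mem_compl_iff]
    intro hxK
    exact hx (hK0 x hxK)
  have hzero : ∫ x, Rplus f V x ∂μ = 0 := by
    rw [integral_congr_ae hae]
    simp
  have e1 : ∫ x, Rplus f V x ∂μ
      = ∫ x, (betaF f + V (shift x) - V x) ∂μ - ∫ x, f x ∂μ :=
    integral_sub (((integrable_const (betaF f)).add hint_Vσ).sub hint_V) hint_f
  have e2 : ∫ x, (betaF f + V (shift x) - V x) ∂μ
      = ∫ x, (betaF f + V (shift x)) ∂μ - ∫ x, V x ∂μ :=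
    integral_sub ((integrable_const (betaF f)).add hint_Vσ) hint_V
  have e3 : ∫ x, (betaF f + V (shift x)) ∂μ = betaF f + ∫ x, V (shift x) ∂μ := by
    rw [integral_add (integrable_const (betaF f)) hint_Vσ, integral_const]
    simp [hprob.measure_univ]
  rw [hzero] at e1
  linarith [hVinv, e1, e2, e3]


/-! ### The common accumulation point -/

lemma exists_common_point {θ : ℝ} (hθ : θ ∈ Set.Ioo (0:ℝ) 1)
    (hdiam : ∀ a b : M, dist a b ≤ 1) {f V : (ℕ → M) → ℝ}
    (hf : IsHolder θ f) (huniq : ∃! μ : Measure (ℕ → M), IsMaximizing f μ)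
    (hV : IsCalibrated f V) (z y₀ : ℕ → M) (hfin : RplusInf f V z ≠ ⊤) :
    ∃ q : ℕ → M,
      (∀ N : ℕ, ∀ U ∈ 𝓝 q, ∃ n ≥ N, shift^[n] z ∈ U) ∧
      (∀ m₀ : ℕ, ∀ U ∈ 𝓝 q, ∃ m ≥ m₀, ∃ p ∈ U,
        shift^[m] p = y₀ ∧ ∀ j < m, Rminus f V (shift^[j] p) = 0) := by
  classical
  have hRc : Continuous (Rplus f V) := continuous_Rplus hθ hdiam hf hV.1
  set T : ℕ → Set (ℕ → M) := fun N => (fun n => shift^[n] z) '' Set.Ici N with hT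
  set P : ℕ → Set (ℕ → M) :=
    fun m => {p | shift^[m] p = y₀ ∧ ∀ j < m, Rminus f V (shift^[j] p) = 0} with hP
  set QQ : ℕ → Set (ℕ → M) := fun m₀ => ⋃ m, ⋃ (_ : m₀ ≤ m), P m with hQQ
  set K₁ : Set (ℕ → M) := ⋂ N, closure (T N) with hK₁
  set Q : Set (ℕ → M) := ⋂ N, closure (QQ N) with hQ
  -- nonemptiness
  have hK₁ne : K₁.Nonempty := by
    refine IsCompact.nonempty_iInter_of_sequence_nonempty_isCompact_isClosed _
      (fun N => closure_mono (Set.image_mono (Set.Ici_subset_Ici.mpr (Nat.le_succ N))))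
      (fun N => ⟨shift^[N] z, subset_closure ⟨N, le_refl N, rfl⟩⟩)
      isClosed_closure.isCompact (fun N => isClosed_closure)
  have hQne : Q.Nonempty := by
    refine IsCompact.nonempty_iInter_of_sequence_nonempty_isCompact_isClosed _
      (fun N => closure_mono (Set.iUnion_mono fun m =>
        Set.iUnion_subset fun h => Set.subset_iUnion
          (fun _ : N ≤ m => P m) ((Nat.le_succ N).trans h)))
      (fun N => ?_) isClosed_closure.isCompact (fun N => isClosed_closure)
    · obtain ⟨p, hp1, hp2⟩ := exists_calibrated_chain hV y₀ N
      exact ⟨p, subset_closure (Set.mem_iUnion.mpr ⟨N, Set.mem_iUnion.mpr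
        ⟨le_refl N, hp1, hp2⟩⟩)⟩
  -- closedness
  have hK₁cl : IsClosed K₁ := isClosed_iInter fun N => isClosed_closure
  have hQcl : IsClosed Q := isClosed_iInter fun N => isClosed_closure
  -- invariance
  have hK₁inv : ∀ x ∈ K₁, shift x ∈ K₁ := by
    intro x hx
    rw [hK₁, Set.mem_iInter]
    intro N
    have h1 : shift x ∈ closure (shift '' T N) :=
      image_closure_subset_closure_image continuous_shift
        ⟨x, Set.mem_iInter.mp hx N, rfl⟩
    refine closure_mono ?_ h1
    rintro y ⟨w, ⟨n, hn, rfl⟩, rfl⟩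
    exact ⟨n + 1, le_trans hn (Nat.le_succ n), Function.iterate_succ_apply' shift n z⟩
  have hQinv : ∀ x ∈ Q, shift x ∈ Q := by
    intro x hx
    rw [hQ, Set.mem_iInter]
    intro m₀
    have h1 : shift x ∈ closure (shift '' QQ (m₀ + 1)) :=
      image_closure_subset_closure_image continuous_shift
        ⟨x, Set.mem_iInter.mp hx (m₀ + 1), rfl⟩
    refine closure_mono ?_ h1
    rintro y ⟨w, hw, rfl⟩
    obtain ⟨m, hm, hw1, hw2⟩ := by
      simpa only [hQQ, Set.mem_iUnion] using hw
    obtain ⟨m', rfl⟩ : ∃ m', m = m' + 1 := ⟨m - 1, by omega⟩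
    refine Set.mem_iUnion.mpr ⟨m', Set.mem_iUnion.mpr ⟨by omega, ?_, ?_⟩⟩
    · rw [← Function.iterate_succ_apply shift m' w]
      exact hw1
    · intro j hj
      rw [← Function.iterate_succ_apply shift j w]
      exact hw2 (j + 1) (by omega)
  -- Rplus vanishes on K₁
  have hRplus_tendsto : Filter.Tendsto (fun n => Rplus f V (shift^[n] z)) atTop (𝓝 0) := by
    have h1 := ENNReal.tendsto_atTop_zero_of_tsum_ne_top hfin
    rw [ENNReal.tendsto_atTop_zero] at h1
    rw [Metric.tendsto_atTop]
    intro ε hε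
    obtain ⟨N, hN⟩ := h1 (ENNReal.ofReal (ε / 2)) (by simp [hε])
    refine ⟨N, fun n hn => ?_⟩
    have h2 := hN n hn
    have h3 : Rplus f V (shift^[n] z) ≤ ε / 2 := by
      have h4 := ENNReal.toReal_mono (by simp) h2
      rw [ENNReal.toReal_ofReal (Rplus_nonneg hV _), ENNReal.toReal_ofReal (by positivity : (0:ℝ) ≤ ε / 2)] at h4
      exact h4
    rw [Real.dist_eq, sub_zero, abs_of_nonneg (Rplus_nonneg hV _)]
    linarith
  have hK₁0 : ∀ x ∈ K₁, Rplus f V x = 0 := by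
    intro x hx
    have hle : ∀ ε : ℝ, 0 < ε → Rplus f V x ≤ ε := by
      intro ε hε
      rw [Metric.tendsto_atTop] at hRplus_tendsto
      obtain ⟨N, hN⟩ := hRplus_tendsto ε hε
      have hcl' : IsClosed {y | Rplus f V y ≤ ε} := isClosed_le hRc continuous_const
      have hsub : T N ⊆ {y | Rplus f V y ≤ ε} := by
        rintro y ⟨n, hn, rfl⟩
        have := hN n hn
        rw [Real.dist_eq, sub_zero, abs_of_nonneg (Rplus_nonneg hV _)] at this
        exact this.le
      exact (hcl'.closure_subset_iff.mpr hsub) (Set.mem_iInter.mp hx N)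
    by_contra hne0
    have h0 : 0 < Rplus f V x := lt_of_le_of_ne (Rplus_nonneg hV x) (Ne.symm hne0)
    linarith [hle (Rplus f V x / 2) (by linarith)]
  have hQ0 : ∀ x ∈ Q, Rplus f V x = 0 := by
    intro x hx
    have hclosed : IsClosed {y | Rminus f V y = 0} := by
      have : Continuous (Rminus f V) := by
        have := hRc
        have heq : Rminus f V = fun x => - Rplus f V x := by
          funext w; rw [Rplus_eq_neg_Rminus]; ring
        rw [heq]
        exact this.neg
      exact isClosed_eq this continuous_const
    have hsub : QQ 1 ⊆ {y | Rminus f V y = 0} := by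
      intro p hp
      obtain ⟨m, hm, hp1, hp2⟩ := by simpa only [hQQ, Set.mem_iUnion] using hp
      have := hp2 0 (by omega)
      simpa using this
    have h1 : Rminus f V x = 0 :=
      (hclosed.closure_subset_iff.mpr hsub) (Set.mem_iInter.mp hx 1)
    rw [Rplus_eq_neg_Rminus, h1, neg_zero]
  -- invariant measures on K₁ and Q
  obtain ⟨μ₁, hμ₁prob, hμ₁map, hμ₁Kc⟩ := exists_invariant_prob hK₁ne hK₁cl hK₁inv
  obtain ⟨μ₂, hμ₂prob, hμ₂map, hμ₂Qc⟩ := exists_invariant_prob hQne hQcl hQinv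
  have hμ₁max : IsMaximizing f μ₁ :=
    ⟨⟨hμ₁prob, hμ₁map⟩, integral_eq_betaF hθ hdiam hf hV hK₁0 hμ₁prob hμ₁map hμ₁Kc⟩
  have hμ₂max : IsMaximizing f μ₂ :=
    ⟨⟨hμ₂prob, hμ₂map⟩, integral_eq_betaF hθ hdiam hf hV hQ0 hμ₂prob hμ₂map hμ₂Qc⟩
  obtain ⟨μM, hμM, hun⟩ := huniq
  have h12 : μ₁ = μ₂ := by rw [hun μ₁ hμ₁max, hun μ₂ hμ₂max]
  -- the sets intersect
  have hinter : (K₁ ∩ Q).Nonempty := by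
    rw [Set.nonempty_iff_ne_empty]
    intro hemp
    have hcover : K₁ᶜ ∪ Qᶜ = Set.univ := by
      rw [← Set.compl_inter, hemp, Set.compl_empty]
    have h1 : μ₁ Set.univ ≤ μ₁ K₁ᶜ + μ₁ Qᶜ := by
      rw [← hcover]
      exact measure_union_le _ _
    rw [hμ₁Kc, h12, hμ₂Qc, measure_univ] at h1
    simp at h1
  obtain ⟨q, hqK₁, hqQ⟩ := hinter
  refine ⟨q, ?_, ?_⟩
  · intro N U hU
    have h1 := Set.mem_iInter.mp hqK₁ N
    rw [mem_closure_iff_nhds] at h1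
    obtain ⟨y, hyU, n, hn, rfl⟩ := h1 U hU
    exact ⟨n, hn, hyU⟩
  · intro m₀ U hU
    have h1 := Set.mem_iInter.mp hqQ m₀
    rw [mem_closure_iff_nhds] at h1
    obtain ⟨p, hpU, hp⟩ := h1 U hU
    obtain ⟨m, hm, hp1, hp2⟩ := by simpa only [hQQ, Set.mem_iUnion] using hp
    exact ⟨m, hm, p, hpU, hp1, hp2⟩


/-! ### Splicing estimate -/

lemma D_comm {θ : ℝ} (x y : ℕ → M) : D θ x y = D θ y x := by
  unfold D
  congr 1
  funext n
  rw [dist_comm]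

lemma pow_rpow_comm {θ : ℝ} (h : 0 ≤ θ) (k : ℕ) (α : ℝ) : ((θ ^ k : ℝ)) ^ α = (θ ^ α) ^ k := by
  rw [← Real.rpow_natCast θ k, ← Real.rpow_mul h, mul_comm, Real.rpow_mul h,
    Real.rpow_natCast]

section Cal2
variable [MeasurableSpace M] {f V : (ℕ → M) → ℝ}

lemma RminusBirk_ge {θ : ℝ} (hV : IsCalibrated f V) (z : ℕ → M)
    (hfin : RplusInf f V z ≠ ⊤) (n : ℕ) :
    -(RplusInf f V z).toReal ≤ RminusBirk f V n z := by
  have h1 : RminusBirk f V n z = -∑ j ∈ Finset.range n, Rplus f V (shift^[j] z) := by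
    rw [RminusBirk, ← Finset.sum_neg_distrib]
    exact Finset.sum_congr rfl fun j _ => by rw [Rplus_eq_neg_Rminus, neg_neg]
  rw [h1, neg_le_neg_iff]
  have h2 : ∑ j ∈ Finset.range n, Rplus f V (shift^[j] z)
      = (∑ j ∈ Finset.range n, ENNReal.ofReal (Rplus f V (shift^[j] z))).toReal := by
    rw [ENNReal.toReal_sum (fun a _ => ENNReal.ofReal_ne_top)]
    exact (Finset.sum_congr rfl fun j _ =>
      (ENNReal.toReal_ofReal (Rplus_nonneg hV _)).symm)
  rw [h2]
  exact ENNReal.toReal_mono hfin (ENNReal.sum_le_tsum _)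

lemma splice_estimate {θ : ℝ} (hθ : θ ∈ Set.Ioo (0:ℝ) 1)
    (hdiam : ∀ a b : M, dist a b ≤ 1)
    (hf : IsHolder θ f) (hVH : IsHolder θ V) :
    ∃ K₀ > (0:ℝ), ∃ a > (0:ℝ), ∀ (z w : ℕ → M) (n : ℕ),
      (∀ i < n, w i = z i) → D θ (shift^[n] w) (shift^[n] z) ≤ 1 →
      RminusBirk f V n z - K₀ * (D θ (shift^[n] w) (shift^[n] z)) ^ a
        ≤ RminusBirk f V n w := by
  obtain ⟨Cf, hCf, αf, hαf, hHf⟩ := hf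
  obtain ⟨CV, hCV, αV, hαV, hHV⟩ := hVH
  have hθ0 : (0:ℝ) < θ := hθ.1
  set r : ℝ := θ ^ αf with hr
  have hr0 : 0 < r := Real.rpow_pos_of_pos hθ0 _
  have hr1 : r < 1 := Real.rpow_lt_one hθ0.le hθ.2 hαf.1
  set a : ℝ := min αf αV with ha
  have ha0 : 0 < a := lt_min hαf.1 hαV.1
  have h1r : (0:ℝ) < 1 - r := by linarith
  refine ⟨Cf * (1 - r)⁻¹ + 2 * CV, by positivity, a, ha0, ?_⟩
  intro z w n hagree hD1
  set η : ℝ := D θ (shift^[n] w) (shift^[n] z) with hη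
  have hη0 : 0 ≤ η := D_nonneg hθ _ _
  have hηa0 : 0 ≤ η ^ a := Real.rpow_nonneg hη0 a
  -- difference identity
  have hdiff : RminusBirk f V n w - RminusBirk f V n z
      = (∑ j ∈ Finset.range n, (f (shift^[j] w) - f (shift^[j] z)))
        + (V w - V z) - (V (shift^[n] w) - V (shift^[n] z)) := by
    rw [RminusBirk_eq, RminusBirk_eq, Finset.sum_sub_distrib]
    ring
  -- iterate D computation
  have hDj : ∀ j ≤ n, D θ (shift^[j] w) (shift^[j] z) = θ ^ (n - j) * η := by
    intro j hj
    have hag : ∀ i < n - j, shift^[j] w i = shift^[j] z i := by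
      intro i hi
      rw [shift_iter_apply, shift_iter_apply]
      exact hagree (i + j) (by omega)
    rw [D_shift hθ hdiam hag]
    have hiter : ∀ x : ℕ → M, shift^[n - j] (shift^[j] x) = shift^[n] x := by
      intro x
      rw [← shift_iter_add]
      congr 1
      omega
    rw [hiter, hiter]
  -- bound on f terms
  have hterm : ∀ j ∈ Finset.range n,
      |f (shift^[j] w) - f (shift^[j] z)| ≤ Cf * η ^ a * r ^ (n - j) := by
    intro j hj
    have hjn : j ≤ n := (Finset.mem_range.mp hj).le
    calc |f (shift^[j] w) - f (shift^[j] z)|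
        ≤ Cf * (D θ (shift^[j] w) (shift^[j] z)) ^ αf := hHf _ _
      _ = Cf * (θ ^ (n - j) * η) ^ αf := by rw [hDj j hjn]
      _ = Cf * (r ^ (n - j) * η ^ αf) := by
          rw [Real.mul_rpow (by positivity) hη0, pow_rpow_comm hθ0.le]
      _ ≤ Cf * (r ^ (n - j) * η ^ a) := by
          apply mul_le_mul_of_nonneg_left _ hCf.le
          apply mul_le_mul_of_nonneg_left _ (by positivity)
          exact rpow_le_rpow_exp hη0 hD1 ha0 (min_le_left _ _)
      _ = Cf * η ^ a * r ^ (n - j) := by ring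
  have hsumgeo : ∑ j ∈ Finset.range n, r ^ (n - j) ≤ (1 - r)⁻¹ := by
    have h1 : ∑ j ∈ Finset.range n, r ^ (n - j) = ∑ j ∈ Finset.range n, r ^ (j + 1) := by
      rw [← Finset.sum_range_reflect (fun j => r ^ (j + 1)) n]
      exact Finset.sum_congr rfl fun j hj => by
        congr 1
        have := Finset.mem_range.mp hj
        omega
    rw [h1]
    calc ∑ j ∈ Finset.range n, r ^ (j + 1) ≤ ∑ j ∈ Finset.range n, r ^ j :=
          Finset.sum_le_sum fun j _ =>
            pow_le_pow_of_le_one hr0.le hr1.le (Nat.le_succ j)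
      _ ≤ ∑' j : ℕ, r ^ j := Summable.sum_le_tsum _ (fun j _ => by positivity)
            (summable_geometric_of_lt_one hr0.le hr1)
      _ = (1 - r)⁻¹ := tsum_geometric_of_lt_one hr0.le hr1
  have h1 : |∑ j ∈ Finset.range n, (f (shift^[j] w) - f (shift^[j] z))|
      ≤ Cf * (1 - r)⁻¹ * η ^ a := by
    calc |∑ j ∈ Finset.range n, (f (shift^[j] w) - f (shift^[j] z))|
        ≤ ∑ j ∈ Finset.range n, |f (shift^[j] w) - f (shift^[j] z)| :=
          Finset.abs_sum_le_sum_abs _ _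
      _ ≤ ∑ j ∈ Finset.range n, Cf * η ^ a * r ^ (n - j) := Finset.sum_le_sum hterm
      _ = Cf * η ^ a * ∑ j ∈ Finset.range n, r ^ (n - j) := by rw [Finset.mul_sum]
      _ ≤ Cf * η ^ a * (1 - r)⁻¹ := by
          apply mul_le_mul_of_nonneg_left hsumgeo (by positivity)
      _ = Cf * (1 - r)⁻¹ * η ^ a := by ring
  have hVbound : ∀ x y : ℕ → M, D θ x y ≤ η → |V x - V y| ≤ CV * η ^ a := by
    intro x y hxy
    calc |V x - V y| ≤ CV * (D θ x y) ^ αV := hHV x y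
      _ ≤ CV * η ^ αV := by
          apply mul_le_mul_of_nonneg_left _ hCV.le
          exact Real.rpow_le_rpow (D_nonneg hθ _ _) hxy hαV.1.le
      _ ≤ CV * η ^ a := by
          apply mul_le_mul_of_nonneg_left _ hCV.le
          exact rpow_le_rpow_exp hη0 hD1 ha0 (min_le_right _ _)
  have h2 : |V w - V z| ≤ CV * η ^ a := by
    apply hVbound
    have := hDj 0 (Nat.zero_le n)
    simp only [Function.iterate_zero, id_eq, Nat.sub_zero] at this
    rw [this]
    calc θ ^ n * η ≤ 1 * η := by
          apply mul_le_mul_of_nonneg_right _ hη0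
          exact pow_le_one₀ hθ0.le hθ.2.le
      _ = η := one_mul η
  have h3 : |V (shift^[n] w) - V (shift^[n] z)| ≤ CV * η ^ a := hVbound _ _ (le_refl η)
  have habs1 := abs_le.mp h1
  have habs2 := abs_le.mp h2
  have habs3 := abs_le.mp h3
  have := hdiff
  nlinarith [habs1.1, habs2.1, habs3.2]

end Cal2

end KB

lemma ereal_le_of_forall_eps {c : ℝ} {L : EReal}
    (h : ∀ ε : ℝ, 0 < ε → ((c - ε : ℝ) : EReal) ≤ L) : ((c : ℝ) : EReal) ≤ L := by
  induction L with
  | bot =>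
    have h1 := h 1 one_pos
    rw [le_bot_iff] at h1
    exact absurd h1 (EReal.coe_ne_bot _)
  | coe l =>
    apply EReal.coe_le_coe_iff.mpr
    by_contra hcl
    push_neg at hcl
    have h1 := h ((c - l) / 2) (by linarith)
    rw [EReal.coe_le_coe_iff] at h1
    linarith
  | top => exact le_top

end Aux

theorem sup_RminusInf_le_limsup_sup_over_preimages'
    [MetricSpace M] [CompactSpace M] [ConnectedSpace M] [MeasurableSpace M] [BorelSpace M]
    (hdiam : ∀ a b : M, dist a b ≤ 1)
    (θ : ℝ) (hθ : θ ∈ Set.Ioo (0 : ℝ) 1)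
    (f V : (ℕ → M) → ℝ) (hf : IsHolder θ f)
    (huniq : ∃! μ : Measure (ℕ → M), IsMaximizing f μ)
    (hV : IsCalibrated f V) (hVH : IsHolder θ V) :
    ∀ A : Set (ℕ → M), IsOpen A → A.Nonempty → ∀ y₀ : ℕ → M,
      (⨆ z ∈ A, -(RplusInf f V z : EReal)) ≤
        Filter.limsup (fun k : ℕ =>
          ⨆ z ∈ {z | z ∈ A ∧ shift^[k] z = y₀}, ((RminusBirk f V k z : ℝ) : EReal)) atTop := by
  intro A hA hAne y₀
  refine iSup₂_le fun z hz => ?_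
  by_cases hfin : RplusInf f V z = ⊤
  · rw [hfin]
    simp
  · set S : ℝ := (RplusInf f V z).toReal with hS
    have hS0 : 0 ≤ S := ENNReal.toReal_nonneg
    have hcoe : -((RplusInf f V z : ℝ≥0∞) : EReal) = ((-S : ℝ) : EReal) := by
      conv_lhs => rw [← ENNReal.ofReal_toReal hfin]
      rw [EReal.coe_ennreal_ofReal, max_eq_left hS0, ← EReal.coe_neg]
    rw [hcoe]
    have key : ∀ ε : ℝ, 0 < ε → ∀ N₀ : ℕ, ∃ k, N₀ ≤ k ∧ ∃ w,
        (w ∈ A ∧ shift^[k] w = y₀) ∧ -S - ε ≤ RminusBirk f V k w := by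
      intro ε hε N₀
      obtain ⟨K₀, hK₀, a, ha, hsplice⟩ := splice_estimate hθ hdiam hf hVH
      obtain ⟨η, hη0, hη1, hηε⟩ := exists_eta K₀ a ε ha hε hK₀.le
      obtain ⟨NA, hNA⟩ := exists_cylinder_subset hA hz
      obtain ⟨q, hq1, hq2⟩ := exists_common_point hθ hdiam hf huniq hV z y₀ hfin
      have hUq : {x : ℕ → M | D θ x q < η / 2} ∈ 𝓝 q := D_mem_nhds hθ hdiam q (by linarith)
      obtain ⟨n, hn, hnD⟩ := hq1 NA _ hUq
      obtain ⟨m, hm, p, hpD, hp1, hp2⟩ := hq2 N₀ _ hUq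
      set w : ℕ → M := fun i => if i < n then z i else p (i - n) with hwdef
      have hwz : ∀ i < n, w i = z i := fun i hi => if_pos hi
      have hwn : shift^[n] w = p := by
        funext i
        rw [shift_iter_apply]
        show (if i + n < n then z (i + n) else p (i + n - n)) = p i
        rw [if_neg (by omega)]
        congr 1
        omega
      have hwA : w ∈ A := hNA w (fun i hi => hwz i (lt_of_lt_of_le hi hn))
      have hwk : shift^[n + m] w = y₀ := by rw [shift_iter_add, hwn, hp1]
      have hDp : D θ (shift^[n] w) (shift^[n] z) ≤ η := by
        rw [hwn]
        have ht := D_triangle hθ hdiam p q (shift^[n] z)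
        have h1 : D θ q (shift^[n] z) = D θ (shift^[n] z) q := D_comm _ _
        have h2 : D θ (shift^[n] z) q < η / 2 := hnD
        have h3 : D θ p q < η / 2 := hpD
        linarith
      have hbirk : RminusBirk f V (n + m) w = RminusBirk f V n w := by
        rw [RminusBirk, Finset.sum_range_add]
        have hzero : ∀ j ∈ Finset.range m, Rminus f V (shift^[n + j] w) = 0 := by
          intro j hj
          rw [shift_iter_add, hwn]
          exact hp2 j (Finset.mem_range.mp hj)
        rw [Finset.sum_congr rfl hzero]
        simp [RminusBirk]
      have hge := hsplice z w n hwz (hDp.trans hη1)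
      have hzS := RminusBirk_ge (θ := θ) hV z hfin n
      have hKD : K₀ * (D θ (shift^[n] w) (shift^[n] z)) ^ a ≤ K₀ * η ^ a := by
        apply mul_le_mul_of_nonneg_left _ hK₀.le
        exact Real.rpow_le_rpow (D_nonneg hθ _ _) hDp ha.le
      refine ⟨n + m, le_trans hm (Nat.le_add_left m n), w, ⟨hwA, hwk⟩, ?_⟩
      rw [hbirk]
      rw [← hS] at hzS
      linarith [hηε]
    refine ereal_le_of_forall_eps fun ε hε => ?_
    have hsub : ((-S - ε : ℝ) : EReal) = (((-S) - ε : ℝ) : EReal) := rfl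
    rw [Filter.limsup_eq_iInf_iSup_of_nat]
    refine le_iInf fun N₀ => ?_
    obtain ⟨k, hk, w, hw, hwval⟩ := key ε hε N₀
    refine le_trans ?_ (le_iSup₂ (f := fun i (_ : i ≥ N₀) =>
      ⨆ w ∈ {w | w ∈ A ∧ shift^[i] w = y₀}, ((RminusBirk f V i w : ℝ) : EReal)) k hk)
    refine le_trans ?_ (le_iSup₂ (f := fun w' (_ : w' ∈ {w' | w' ∈ A ∧ shift^[k] w' = y₀}) =>
      ((RminusBirk f V k w' : ℝ) : EReal)) w hw)
    exact EReal.coe_le_coe_iff.mpr hwval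

theorem sup_RminusInf_le_limsup_sup_over_preimages
    [MetricSpace M] [CompactSpace M] [ConnectedSpace M] [MeasurableSpace M] [BorelSpace M]
    (hdiam : ∀ a b : M, dist a b ≤ 1)
    (θ : ℝ) (hθ : θ ∈ Set.Ioo (0 : ℝ) 1)
    (f V : (ℕ → M) → ℝ) (hf : IsHolder θ f)
    (huniq : ∃! μ : Measure (ℕ → M), IsMaximizing f μ)
    (hV : IsCalibrated f V) (hVH : IsHolder θ V) :
    ∀ A : Set (ℕ → M), IsOpen A → A.Nonempty → ∀ y₀ : ℕ → M,
      (⨆ z ∈ A, -(RplusInf f V z : EReal)) ≤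
        Filter.limsup (fun k : ℕ =>
          ⨆ z ∈ {z | z ∈ A ∧ shift^[k] z = y₀}, ((RminusBirk f V k z : ℝ) : EReal)) atTop := by
  exact sup_RminusInf_le_limsup_sup_over_preimages' hdiam θ hθ f V hf huniq hV hVH

end GXY
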